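/- If FPR(s) = FNR(s) for every demographic group s ∈ S, and the error rates are equal across all groups, i.e. ErrorRate(s_i) = ErrorRate(s_j) for all s_i, s_j ∈ S, then both fairness metrics vanish: mAOD = 0 and mEOD = 0. -/

import Mathlib

lemma const_sup_sub_inf {S : Type*} [Fintype S] [Nonempty S] (f : S → ℝ) (c : ℝ)
    (h : ∀ s, f s = c) :
    Finset.univ.sup' Finset.univ_nonempty f - Finset.univ.inf' Finset.univ_nonempty f = 0 := by
  have hs : Finset.univ.sup' Finset.univ_nonempty f = c := by
    apply le_antisymm
    · exact Finset.sup'_le _ _ fun s _ => (h s).le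
    · obtain ⟨s⟩ := ‹Nonempty S›
      exact (h s).ge.trans (Finset.le_sup' f (Finset.mem_univ s))
  have hi : Finset.univ.inf' Finset.univ_nonempty f = c := by
    apply le_antisymm
    · obtain ⟨s⟩ := ‹Nonempty S›
      exact (Finset.inf'_le f (Finset.mem_univ s)).trans (h s).le
    · exact Finset.le_inf' _ _ fun s _ => (h s).ge
  rw [hs, hi, sub_self]

/-- If FPR(s) = FNR(s) for every demographic group s ∈ S, and the error rates
are equal across all groups, then both fairness metrics vanish:
mAOD = 0 and mEOD = 0. -/
theorem mAOD_and_mEOD_eq_zero_of_FPR_eq_FNR_and_equal_error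
    {S : Type*} [Fintype S] [Nonempty S]
    (TP FP FN TN : S → ℝ)
    (hTP : ∀ s, 0 ≤ TP s) (hFP : ∀ s, 0 ≤ FP s)
    (hFN : ∀ s, 0 ≤ FN s) (hTN : ∀ s, 0 ≤ TN s)
    (hpos : ∀ s, TP s + FN s > 0) (hneg : ∀ s, FP s + TN s > 0)
    (TPR FPR FNR ErrorRate : S → ℝ)
    (hTPR : ∀ s, TPR s = TP s / (TP s + FN s))
    (hFPR : ∀ s, FPR s = FP s / (FP s + TN s))
    (hFNR : ∀ s, FNR s = FN s / (FN s + TP s))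
    (hER : ∀ s, ErrorRate s = (FP s + FN s) / (TP s + FP s + FN s + TN s))
    (mAOD mEOD : ℝ)
    (hmAOD : mAOD = (1/2) *
      (Finset.univ.sup' Finset.univ_nonempty (fun s => TPR s + FPR s)
        - Finset.univ.inf' Finset.univ_nonempty (fun s => TPR s + FPR s)))
    (hmEOD : mEOD = Finset.univ.sup' Finset.univ_nonempty TPR
        - Finset.univ.inf' Finset.univ_nonempty TPR)
    (hcond : ∀ s, FPR s = FNR s)
    (herr : ∀ si sj : S, ErrorRate si = ErrorRate sj) :
    mAOD = 0 ∧ mEOD = 0 := by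
  obtain ⟨s0⟩ := ‹Nonempty S›
  have hpos' : ∀ s, FN s + TP s > 0 := fun s => by have := hpos s; linarith
  have htot : ∀ s, TP s + FP s + FN s + TN s > 0 := fun s => by
    have := hpos s; have := hneg s; linarith
  have hcross : ∀ s, FP s * (FN s + TP s) = FN s * (FP s + TN s) := by
    intro s
    have h := hcond s
    rw [hFPR, hFNR] at h
    exact (div_eq_div_iff (hneg s).ne' (hpos' s).ne').mp h
  have hFNR_ER : ∀ s, FNR s = ErrorRate s := by
    intro s
    rw [hFNR, hER]
    rw [div_eq_div_iff (hpos' s).ne' (htot s).ne']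
    have := hcross s
    ring_nf
    ring_nf at this
    linarith
  have hTPR_ER : ∀ s, TPR s = 1 - ErrorRate s := by
    intro s
    rw [← hFNR_ER, hTPR, hFNR, add_comm (FN s) (TP s), eq_sub_iff_add_eq,
      ← add_div, div_self (hpos s).ne']
  have hFPR_ER : ∀ s, FPR s = ErrorRate s := fun s => (hcond s).trans (hFNR_ER s)
  constructor
  · rw [hmAOD, const_sup_sub_inf (fun s => TPR s + FPR s) (1 - ErrorRate s0 + ErrorRate s0)
      (fun s => by show TPR s + FPR s = _; rw [hTPR_ER, hFPR_ER, herr s s0]), mul_zero]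
  · rw [hmEOD, const_sup_sub_inf TPR (1 - ErrorRate s0)
      (fun s => by rw [hTPR_ER, herr s s0])]
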